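/- arXiv:2511.00809 — 2 statements merged into one kernel-verified Lean document; each statement's English description precedes it below -/
import Mathlib

section
/- Let F be a finite field, C ≤ F^Ω a code of dimension k with generator matrix G and column map τ. If (χ(C), ω) satisfies the unique decomposition property and C is a constant weight code, then for all 1-dimensional subspaces I, J ≤ F^{[k]} and all b ∈ ℝ, |{i ∈ χ(C) : τ(i) ∈ I, ω(i) = b}| = |{j ∈ χ(C) : τ(j) ∈ J, ω(j) = b}|. -/
open scoped Classical
open Finset

/-- ω-weight of a vector β ∈ F^Ω. -/
noncomputable def wwt {F Ω : Type*} [Field F] [Fintype Ω] (ω : Ω → ℝ) (β : Ω → F) : ℝ :=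
  ∑ i ∈ univ.filter (fun i => β i ≠ 0), ω i

/-- ω-weight of a set A ⊆ F^Ω. -/
noncomputable def WWt {F Ω : Type*} [Field F] [Fintype Ω] (ω : Ω → ℝ) (A : Set (Ω → F)) : ℝ :=
  ∑ i ∈ univ.filter (fun i => ∃ β ∈ A, β i ≠ 0), ω i

section Aux

variable {F : Type*} [Field F] {k : ℕ}

noncomputable def dotL (v : Fin k → F) : (Fin k → F) →ₗ[F] F where
  toFun γ := dotProduct γ v
  map_add' := by intros; simp [add_dotProduct]
  map_smul' := by intros; simp [smul_dotProduct]

lemma dotL_apply (v γ : Fin k → F) : dotL v γ = dotProduct γ v := rfl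

lemma exists_dot_eq (f : (Fin k → F) →ₗ[F] F) :
    ∃ c : Fin k → F, ∀ γ, dotProduct γ c = f γ := by
  refine ⟨fun i => f (fun j => if i = j then 1 else 0), fun γ => ?_⟩
  rw [LinearMap.pi_apply_eq_sum_univ f γ, dotProduct]
  simp [smul_eq_mul]

variable [Fintype F]

lemma card_filter_ker {W : Type*} [AddCommGroup W] [Module F W] [Fintype W]
    (φ : (Fin k → F) →ₗ[F] W) (hs : Function.Surjective φ) :
    (univ.filter fun γ : Fin k → F => φ γ = 0).card
      = Fintype.card F ^ (k - Module.finrank F W) := by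
  have h1 : (univ.filter fun γ : Fin k → F => φ γ = 0).card
      = Fintype.card (LinearMap.ker φ) := by
    rw [Fintype.card_subtype]
    congr 1
  have h2 : Fintype.card (LinearMap.ker φ)
      = Fintype.card F ^ Module.finrank F (LinearMap.ker φ) := Module.card_eq_pow_finrank
  have h3 : Module.finrank F (LinearMap.range φ) + Module.finrank F (LinearMap.ker φ) = k := by
    rw [LinearMap.finrank_range_add_finrank_ker]
    simp
  rw [LinearMap.range_eq_top.2 hs] at h3
  rw [finrank_top F W] at h3
  have h4 : Module.finrank F (LinearMap.ker φ) = k - Module.finrank F W := by omega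
  rw [h1, h2, h4]

lemma dotL_surjective {v : Fin k → F} (hv : v ≠ 0) : Function.Surjective (dotL v) := by
  obtain ⟨j, hj⟩ : ∃ j, v j ≠ 0 := by
    by_contra h
    push_neg at h
    exact hv (funext h)
  intro a
  refine ⟨Pi.single j (a * (v j)⁻¹), ?_⟩
  rw [dotL_apply, dotProduct]
  rw [Finset.sum_eq_single j]
  · simp [Pi.single_apply, mul_assoc, inv_mul_cancel₀ hj]
  · intro b _ hb; simp [Pi.single_apply, hb]
  · simp

lemma card_V {v : Fin k → F} (hv : v ≠ 0) :
    (univ.filter fun γ : Fin k → F => dotProduct γ v = 0).card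
      = Fintype.card F ^ (k - 1) := by
  have := card_filter_ker (dotL v) (dotL_surjective hv)
  rw [Module.finrank_self] at this
  rw [← this]
  congr 1

lemma pair_surjective {v x : Fin k → F} (hv : v ≠ 0) (hx : x ∉ Submodule.span F {v}) :
    Function.Surjective ((dotL v).prod (dotL x)) := by
  have hx0 : x ≠ 0 := fun h => hx (h ▸ Submodule.zero_mem _)
  have hvx : v ∉ Submodule.span F {x} := by
    intro h
    rw [Submodule.mem_span_singleton] at h
    obtain ⟨c, hc⟩ := h
    have hc0 : c ≠ 0 := by rintro rfl; simp at hc; exact hv hc.symm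
    apply hx
    rw [Submodule.mem_span_singleton]
    exact ⟨c⁻¹, by rw [← hc, smul_smul, inv_mul_cancel₀ hc0, one_smul]⟩
  obtain ⟨f, hf, hfmap⟩ := Submodule.exists_dual_map_eq_bot_of_notMem hx inferInstance
  obtain ⟨g, hg, hgmap⟩ := Submodule.exists_dual_map_eq_bot_of_notMem hvx inferInstance
  have hfv : f v = 0 := by
    have h := Submodule.mem_map_of_mem (f := f) (Submodule.mem_span_singleton_self v)
    rw [hfmap] at h
    exact (Submodule.mem_bot F).mp h
  have hgx : g x = 0 := by
    have h := Submodule.mem_map_of_mem (f := g) (Submodule.mem_span_singleton_self x)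
    rw [hgmap] at h
    exact (Submodule.mem_bot F).mp h
  rintro ⟨a, b⟩
  obtain ⟨c, hc⟩ := exists_dot_eq ((a * (g v)⁻¹) • g + (b * (f x)⁻¹) • f)
  refine ⟨c, ?_⟩
  have h1 : dotL v c = a := by
    rw [dotL_apply, dotProduct_comm, hc]
    simp [hfv, mul_assoc, inv_mul_cancel₀ hg]
  have h2 : dotL x c = b := by
    rw [dotL_apply, dotProduct_comm, hc]
    simp [hgx, mul_assoc, inv_mul_cancel₀ hf]
  simp [LinearMap.prod_apply, h1, h2]

lemma card_pair {v x : Fin k → F} (hv : v ≠ 0) (hx : x ∉ Submodule.span F {v}) :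
    (univ.filter fun γ : Fin k → F =>
        dotProduct γ v = 0 ∧ dotProduct γ x = 0).card
      = Fintype.card F ^ (k - 2) := by
  have h := card_filter_ker ((dotL v).prod (dotL x)) (pair_surjective hv hx)
  have h2 : Module.finrank F (F × F) = 2 := by simp
  rw [h2] at h
  rw [← h]
  congr 1
  ext γ
  simp [LinearMap.prod_apply, dotL_apply, Prod.ext_iff]

end Aux

lemma key_sum {F Ω : Type*} [Field F] [Fintype F] [Fintype Ω]
    (ω : Ω → ℝ) {k : ℕ} (G : Matrix (Fin k) Ω F) (w0 : ℝ)
    (hc : ∀ γ : Fin k → F, γ ≠ 0 → wwt ω (Matrix.vecMul γ G) = w0)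
    (v : Fin k → F) (hv : v ≠ 0) :
    ((Fintype.card F ^ (k-1) - Fintype.card F ^ (k-2) : ℕ) : ℝ)
      * ∑ i ∈ univ.filter (fun i => (fun r => G r i) ≠ 0
          ∧ (fun r => G r i) ∉ Submodule.span F {v}), ω i
    = ((Fintype.card F ^ (k-1) - 1 : ℕ) : ℝ) * w0 := by
  classical
  set Vf := univ.filter (fun γ : Fin k → F => dotProduct γ v = 0) with hVf
  -- Evaluation 1
  have hz : Vf.filter (fun γ => γ = 0) = {0} := by
    ext γ
    simp only [hVf, mem_filter, mem_univ, true_and, mem_singleton]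
    constructor
    · exact fun h => h.2
    · rintro rfl; simp [zero_dotProduct]
  have e1 : ∑ γ ∈ Vf, wwt ω (Matrix.vecMul γ G) = ((Vf.card - 1 : ℕ) : ℝ) * w0 := by
    rw [← Finset.sum_filter_add_sum_filter_not Vf (fun γ => γ = 0)]
    rw [hz]
    have hsum0 : ∑ γ ∈ ({0} : Finset (Fin k → F)), wwt ω (Matrix.vecMul γ G) = 0 := by
      simp [wwt, Matrix.zero_vecMul]
    rw [hsum0, zero_add]
    rw [Finset.sum_congr rfl (fun γ hγ => hc γ (Finset.mem_filter.mp hγ).2)]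
    rw [Finset.sum_const]
    have hcard : (Vf.filter (fun γ => ¬ γ = 0)).card = Vf.card - 1 := by
      have h := Finset.card_filter_add_card_filter_not
        (s := Vf) (p := fun γ => γ = 0)
      rw [hz, Finset.card_singleton] at h
      omega
    rw [hcard, nsmul_eq_mul]
  -- Evaluation 2
  have hcnt : ∀ i : Ω, (Vf.filter (fun γ => dotProduct γ (fun r => G r i) ≠ 0)).card
      = if (fun r => G r i) ≠ 0 ∧ (fun r => G r i) ∉ Submodule.span F {v}
          then (Fintype.card F ^ (k-1) - Fintype.card F ^ (k-2)) else 0 := by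
    intro i
    by_cases hmem : (fun r => G r i) ∉ Submodule.span F {v}
    · have hne : (fun r => G r i) ≠ 0 := fun h => hmem (h ▸ Submodule.zero_mem _)
      rw [if_pos ⟨hne, hmem⟩]
      have hAll : Vf.card = Fintype.card F ^ (k-1) := card_V hv
      have hBoth : (Vf.filter (fun γ => dotProduct γ (fun r => G r i) = 0)).card
          = Fintype.card F ^ (k-2) := by
        rw [hVf, Finset.filter_filter]
        exact card_pair hv hmem
      have h := Finset.card_filter_add_card_filter_not
        (s := Vf) (p := fun γ => dotProduct γ (fun r => G r i) = 0)
      rw [hBoth, hAll] at h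
      have h' : (Vf.filter (fun γ => dotProduct γ (fun r => G r i) ≠ 0)).card
          = (Vf.filter (fun γ => ¬ dotProduct γ (fun r => G r i) = 0)).card := rfl
      rw [h']
      omega
    · push_neg at hmem
      rw [if_neg (by tauto)]
      rw [Finset.card_eq_zero, Finset.filter_eq_empty_iff]
      intro γ hγ
      rw [hVf, Finset.mem_filter] at hγ
      obtain ⟨c, hc'⟩ := Submodule.mem_span_singleton.mp hmem
      rw [not_ne_iff, ← hc', dotProduct_smul, hγ.2, smul_zero]
  have e2 : ∑ γ ∈ Vf, wwt ω (Matrix.vecMul γ G)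
      = ((Fintype.card F ^ (k-1) - Fintype.card F ^ (k-2) : ℕ) : ℝ)
        * ∑ i ∈ univ.filter (fun i => (fun r => G r i) ≠ 0
            ∧ (fun r => G r i) ∉ Submodule.span F {v}), ω i := by
    have step1 : ∀ γ : Fin k → F, wwt ω (Matrix.vecMul γ G)
        = ∑ i ∈ univ, if dotProduct γ (fun r => G r i) ≠ 0 then ω i else 0 := by
      intro γ
      rw [wwt, Finset.sum_filter]
      rfl
    rw [Finset.sum_congr rfl (fun γ _ => step1 γ), Finset.sum_comm]
    have step2 : ∀ i : Ω, ∑ γ ∈ Vf, (if dotProduct γ (fun r => G r i) ≠ 0 then ω i else 0)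
        = ((if (fun r => G r i) ≠ 0 ∧ (fun r => G r i) ∉ Submodule.span F {v}
            then (Fintype.card F ^ (k-1) - Fintype.card F ^ (k-2)) else 0 : ℕ) : ℝ) * ω i := by
      intro i
      rw [← Finset.sum_filter, Finset.sum_const, ← hcnt i, nsmul_eq_mul]
    rw [Finset.sum_congr rfl (fun i _ => step2 i)]
    rw [Finset.mul_sum]
    rw [← Finset.sum_filter_add_sum_filter_not univ
      (fun i => (fun r => G r i) ≠ 0 ∧ (fun r => G r i) ∉ Submodule.span F {v})]
    have hA : ∀ i ∈ univ.filter (fun i => (fun r => G r i) ≠ 0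
        ∧ (fun r => G r i) ∉ Submodule.span F {v}),
        ((if (fun r => G r i) ≠ 0 ∧ (fun r => G r i) ∉ Submodule.span F {v}
            then (Fintype.card F ^ (k-1) - Fintype.card F ^ (k-2)) else 0 : ℕ) : ℝ) * ω i
        = ((Fintype.card F ^ (k-1) - Fintype.card F ^ (k-2) : ℕ) : ℝ) * ω i := by
      intro i hi
      rw [if_pos (Finset.mem_filter.mp hi).2]
    have hB : ∀ i ∈ univ.filter (fun i => ¬((fun r => G r i) ≠ 0
        ∧ (fun r => G r i) ∉ Submodule.span F {v})),
        ((if (fun r => G r i) ≠ 0 ∧ (fun r => G r i) ∉ Submodule.span F {v}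
            then (Fintype.card F ^ (k-1) - Fintype.card F ^ (k-2)) else 0 : ℕ) : ℝ) * ω i
        = 0 := by
      intro i hi
      rw [if_neg (Finset.mem_filter.mp hi).2]
      simp
    rw [Finset.sum_congr rfl hA, Finset.sum_congr rfl hB, Finset.sum_const_zero, add_zero]
  rw [← e2, e1, hVf, card_V hv]

lemma span_of_finrank_one {F : Type*} [Field F] {k : ℕ} {I : Submodule F (Fin k → F)}
    (hI : Module.finrank F I = 1) :
    ∃ v : Fin k → F, v ≠ 0 ∧ I = Submodule.span F {v} := by
  obtain ⟨v, hv0, hv⟩ := finrank_eq_one_iff'.mp hI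
  refine ⟨(v : Fin k → F), by simpa [Submodule.coe_eq_zero] using hv0, ?_⟩
  apply le_antisymm
  · intro w hw
    obtain ⟨c, hc⟩ := hv ⟨w, hw⟩
    rw [Submodule.mem_span_singleton]
    exact ⟨c, congrArg Subtype.val hc⟩
  · rw [Submodule.span_singleton_le_iff_mem]
    exact v.2

theorem stmt15 {F Ω : Type*} [Field F] [Fintype F] [Fintype Ω] [Nonempty Ω]
    (ω : Ω → ℝ) (hω : ∀ i, 0 < ω i)
    (k : ℕ) (hk1 : 1 ≤ k) (G : Matrix (Fin k) Ω F)
    (C : Submodule F (Ω → F)) (hdim : Module.finrank F C = k)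
    (hG : (C : Set (Ω → F)) = Set.range (fun γ : Fin k → F => Matrix.vecMul γ G))
    (hUDP : ∀ I J : Finset Ω,
      (∀ i ∈ I, ∃ β ∈ C, β i ≠ 0) → (∀ j ∈ J, ∃ β ∈ C, β j ≠ 0) →
      (∑ i ∈ I, ω i) = (∑ j ∈ J, ω j) →
      ∀ b : ℝ, (I.filter (fun i => ω i = b)).card = (J.filter (fun j => ω j = b)).card)
    (hconst : ∀ α ∈ C, ∀ β ∈ C, α ≠ 0 → β ≠ 0 → wwt ω α = wwt ω β) :
    ∀ I J : Submodule F (Fin k → F),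
      Module.finrank F I = 1 → Module.finrank F J = 1 → ∀ b : ℝ,
      (univ.filter
          (fun i => (∃ β ∈ C, β i ≠ 0) ∧ (fun r => G r i) ∈ I ∧ ω i = b)).card
        = (univ.filter
            (fun j => (∃ β ∈ C, β j ≠ 0) ∧ (fun r => G r j) ∈ J ∧ ω j = b)).card := by
  classical
  intro I J hI hJ b
  -- trivial case k = 1
  rcases eq_or_lt_of_le hk1 with hk | hk2
  · have hIT : I = ⊤ := Submodule.eq_top_of_finrank_eq
      (by rw [hI, Module.finrank_fin_fun, ← hk])
    have hJT : J = ⊤ := Submodule.eq_top_of_finrank_eq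
      (by rw [hJ, Module.finrank_fin_fun, ← hk])
    rw [hIT, hJT]
  · -- main case: 2 ≤ k
    have hmem : ∀ β, β ∈ C ↔ ∃ γ : Fin k → F, Matrix.vecMul γ G = β := by
      intro β
      rw [← SetLike.mem_coe, hG]
      exact Iff.rfl
    have hχ : ∀ i : Ω, (∃ β ∈ C, β i ≠ 0) ↔ (fun r => G r i) ≠ 0 := by
      intro i
      constructor
      · rintro ⟨β, hβ, hβi⟩ hcoli
        obtain ⟨γ, rfl⟩ := (hmem β).mp hβ
        apply hβi
        show dotProduct γ (fun r => G r i) = 0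
        rw [hcoli, dotProduct_zero]
      · intro hcoli
        obtain ⟨r, hr⟩ : ∃ r, G r i ≠ 0 := by
          by_contra h
          push_neg at h
          exact hcoli (funext h)
        refine ⟨Matrix.vecMul (Pi.single r 1) G, (hmem _).mpr ⟨_, rfl⟩, ?_⟩
        show dotProduct (Pi.single r 1) (fun s => G s i) ≠ 0
        rw [dotProduct]
        rw [Finset.sum_eq_single r]
        · simpa using hr
        · intro b' _ hb; simp [Pi.single_apply, hb]
        · simp
    have hrange : LinearMap.range G.vecMulLinear = C := by
      ext β
      rw [LinearMap.mem_range, hmem]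
      simp only [Matrix.vecMulLinear_apply]
    have hker : LinearMap.ker G.vecMulLinear = ⊥ := by
      have h3 := LinearMap.finrank_range_add_finrank_ker G.vecMulLinear
      rw [hrange, hdim, Module.finrank_fin_fun] at h3
      have h4 : Module.finrank F (LinearMap.ker G.vecMulLinear) = 0 := by omega
      exact Submodule.finrank_eq_zero.mp h4
    have hinj : ∀ γ : Fin k → F, γ ≠ 0 → Matrix.vecMul γ G ≠ 0 := by
      intro γ hγ h
      apply hγ
      have h5 : γ ∈ LinearMap.ker G.vecMulLinear := by
        rw [LinearMap.mem_ker]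
        show Matrix.vecMul γ G = 0
        exact h
      rw [hker] at h5
      simpa using h5
    -- the common weight
    have hk0 : 0 < k := hk1
    set e0 : Fin k → F := Pi.single ⟨0, hk0⟩ 1 with he0def
    have he0 : e0 ≠ 0 := by
      intro h
      have h6 := congrFun h ⟨0, hk0⟩
      simp [he0def] at h6
    set w0 := wwt ω (Matrix.vecMul e0 G) with hw0
    have hc : ∀ γ : Fin k → F, γ ≠ 0 → wwt ω (Matrix.vecMul γ G) = w0 := by
      intro γ hγ
      exact hconst _ ((hmem _).mpr ⟨γ, rfl⟩) _ ((hmem _).mpr ⟨e0, rfl⟩)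
        (hinj γ hγ) (hinj e0 he0)
    -- cardinal coefficient is nonzero
    have hq : 1 < Fintype.card F := Fintype.one_lt_card
    have hlt : Fintype.card F ^ (k-2) < Fintype.card F ^ (k-1) :=
      Nat.pow_lt_pow_right hq (by omega)
    have hcne : ((Fintype.card F ^ (k-1) - Fintype.card F ^ (k-2) : ℕ) : ℝ) ≠ 0 := by
      rw [Nat.cast_ne_zero]
      omega
    -- equal complement sums
    obtain ⟨v, hv, rfl⟩ := span_of_finrank_one hI
    obtain ⟨u, hu, rfl⟩ := span_of_finrank_one hJ
    have hBIJ : ∑ i ∈ univ.filter (fun i => (fun r => G r i) ≠ 0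
          ∧ (fun r => G r i) ∉ Submodule.span F {v}), ω i
        = ∑ i ∈ univ.filter (fun i => (fun r => G r i) ≠ 0
          ∧ (fun r => G r i) ∉ Submodule.span F {u}), ω i := by
      have h1 := key_sum ω G w0 hc v hv
      have h2 := key_sum ω G w0 hc u hu
      exact mul_left_cancel₀ hcne (h1.trans h2.symm)
    -- equal sums over the main sets
    have hsplit : ∀ x : Fin k → F,
        (∑ i ∈ univ.filter (fun i => (fun r => G r i) ≠ 0
            ∧ (fun r => G r i) ∈ Submodule.span F {x}), ω i)
          + ∑ i ∈ univ.filter (fun i => (fun r => G r i) ≠ 0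
            ∧ (fun r => G r i) ∉ Submodule.span F {x}), ω i
        = ∑ i ∈ univ.filter (fun i => (fun r => G r i) ≠ 0), ω i := by
      intro x
      rw [← Finset.sum_filter_add_sum_filter_not
        (univ.filter (fun i => (fun r => G r i) ≠ 0))
        (fun i => (fun r => G r i) ∈ Submodule.span F {x})]
      rw [Finset.filter_filter, Finset.filter_filter]
    have hAIJ : ∑ i ∈ univ.filter (fun i => (fun r => G r i) ≠ 0
          ∧ (fun r => G r i) ∈ Submodule.span F {v}), ω i
        = ∑ i ∈ univ.filter (fun i => (fun r => G r i) ≠ 0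
          ∧ (fun r => G r i) ∈ Submodule.span F {u}), ω i := by
      have h1 := hsplit v
      have h2 := hsplit u
      rw [hBIJ] at h1
      linarith
    -- apply UDP
    have hudp := hUDP
      (univ.filter (fun i => (fun r => G r i) ≠ 0 ∧ (fun r => G r i) ∈ Submodule.span F {v}))
      (univ.filter (fun i => (fun r => G r i) ≠ 0 ∧ (fun r => G r i) ∈ Submodule.span F {u}))
      (fun i hi => (hχ i).mpr (Finset.mem_filter.mp hi).2.1)
      (fun i hi => (hχ i).mpr (Finset.mem_filter.mp hi).2.1)
      hAIJ b
    rw [Finset.filter_filter, Finset.filter_filter] at hudp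
    have hgoalI : univ.filter (fun i => (∃ β ∈ C, β i ≠ 0)
          ∧ (fun r => G r i) ∈ Submodule.span F {v} ∧ ω i = b)
        = univ.filter (fun i => ((fun r => G r i) ≠ 0
          ∧ (fun r => G r i) ∈ Submodule.span F {v}) ∧ ω i = b) := by
      apply Finset.filter_congr
      intro i _
      rw [hχ i]
      tauto
    have hgoalJ : univ.filter (fun i => (∃ β ∈ C, β i ≠ 0)
          ∧ (fun r => G r i) ∈ Submodule.span F {u} ∧ ω i = b)
        = univ.filter (fun i => ((fun r => G r i) ≠ 0
          ∧ (fun r => G r i) ∈ Submodule.span F {u}) ∧ ω i = b) := by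
      apply Finset.filter_congr
      intro i _
      rw [hχ i]
      tauto
    rw [hgoalI, hgoalJ]
    exact hudp
end

section
/- Let F be a finite field, Ω finite, and ω : Ω → ℝ⁺ the constant function 1 (so ω-weight is the Hamming weight). Then F^Ω satisfies the MacWilliams extension property: every Hamming-weight-preserving F-linear map from a subspace C ≤ F^Ω into F^Ω extends to a Hamming weight isometry of F^Ω. -/
open scoped Classical
open Finset

lemma exists_equiv_of_fiber_card_eq {α β : Type*} [Fintype α] [DecidableEq β] (f g : α → β)
    (h : ∀ b, (univ.filter fun a => f a = b).card = (univ.filter fun a => g a = b).card) :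
    ∃ e : α ≃ α, ∀ a, f (e a) = g a := by
  classical
  have hcard : ∀ b, Fintype.card {a // g a = b} = Fintype.card {a // f a = b} := by
    intro b
    rw [Fintype.card_subtype, Fintype.card_subtype, h b]
  let eqv : ∀ b, {a // g a = b} ≃ {a // f a = b} := fun b => Fintype.equivOfCardEq (hcard b)
  refine ⟨(Equiv.sigmaFiberEquiv g).symm.trans
    ((Equiv.sigmaCongrRight eqv).trans (Equiv.sigmaFiberEquiv f)), fun a => ?_⟩
  exact (eqv (g a) ⟨a, rfl⟩).2

set_option maxHeartbeats 1000000 in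
theorem stmt19 {F Ω : Type*} [Field F] [Fintype F] [Fintype Ω] [Nonempty Ω] :
    ∀ (C : Submodule F (Ω → F)) (f : C →ₗ[F] (Ω → F)),
      (∀ α : C,
        (univ.filter (fun i => f α i ≠ 0)).card
          = (univ.filter (fun i => (α : Ω → F) i ≠ 0)).card) →
      ∃ φ : (Ω → F) ≃ₗ[F] (Ω → F),
        (∀ β : Ω → F,
          (univ.filter (fun i => φ β i ≠ 0)).card
            = (univ.filter (fun i => β i ≠ 0)).card) ∧
        ∀ α : C, φ (α : Ω → F) = f α := by
  classical
  intro C f hwt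
  haveI : Finite C := Subtype.finite
  haveI : Finite (C →ₗ[F] F) :=
    Finite.of_injective (fun g => (g : C → F)) DFunLike.coe_injective
  haveI : Fintype (C →ₗ[F] F) := Fintype.ofFinite _
  -- a nontrivial (hence primitive) additive character of F
  obtain ⟨ψ, hψ⟩ : ∃ ψ : AddChar F ℂ, ψ (1:F) ≠ 1 :=
    AddChar.exists_apply_ne_zero.2 one_ne_zero
  have hψne : ψ ≠ 1 := fun h => hψ (by simp [h])
  have hprim : ψ.IsPrimitive := AddChar.IsPrimitive.of_ne_one hψne
  have hsum : ∀ x : F, (∑ c : F, ψ (c * x)) = if x = 0 then (Fintype.card F : ℂ) else 0 := by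
    intro x; split_ifs with hx
    · simp [hx]
    · calc ∑ c : F, ψ (c * x) = ∑ c : F, ψ.mulShift x c := by
            simp [AddChar.mulShift_apply, mul_comm]
        _ = 0 := AddChar.sum_eq_zero_iff_ne_zero.2 (hprim hx)
  -- coordinate functionals
  set lam : Ω → (C →ₗ[F] F) := fun i => (LinearMap.proj i).comp C.subtype with hlam_def
  set mu : Ω → (C →ₗ[F] F) := fun i => (LinearMap.proj i).comp f with hmu_def
  set cnt : (Ω → (C →ₗ[F] F)) → (C →ₗ[F] F) → ℕ := fun ν g =>
    ∑ i, (univ.filter fun c : F => c • ν i = g).card with hcnt_def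
  -- character sum identity
  have key : ∀ (ν : Ω → (C →ₗ[F] F)) (α : C),
      ∑ g : C →ₗ[F] F, (cnt ν g : ℂ) * ψ (g α)
        = ((univ.filter fun i => ν i α = 0).card : ℂ) * (Fintype.card F : ℂ) := by
    intro ν α
    have h1 : ∀ i : Ω, (∑ g : C →ₗ[F] F,
        ((univ.filter fun c : F => c • ν i = g).card : ℂ) * ψ (g α))
        = if ν i α = 0 then (Fintype.card F : ℂ) else 0 := by
      intro i
      have h2 : ∀ g : C →ₗ[F] F,
          ((univ.filter fun c : F => c • ν i = g).card : ℂ) * ψ (g α)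
          = ∑ c ∈ univ.filter fun c : F => c • ν i = g, ψ ((c • ν i) α) := by
        intro g
        rw [Finset.sum_congr rfl (fun c hc => by rw [(Finset.mem_filter.1 hc).2]),
          Finset.sum_const, nsmul_eq_mul]
      rw [Finset.sum_congr rfl (fun g _ => h2 g),
        Finset.sum_fiberwise univ (fun c : F => c • ν i) (fun c => ψ ((c • ν i) α))]
      calc ∑ c : F, ψ ((c • ν i) α) = ∑ c : F, ψ (c * ν i α) := by
            simp [LinearMap.smul_apply, smul_eq_mul]
        _ = _ := hsum (ν i α)
    calc ∑ g : C →ₗ[F] F, (cnt ν g : ℂ) * ψ (g α)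
        = ∑ g : C →ₗ[F] F, ∑ i,
            ((univ.filter fun c : F => c • ν i = g).card : ℂ) * ψ (g α) := by
          refine Finset.sum_congr rfl fun g _ => ?_
          rw [hcnt_def]; push_cast; rw [Finset.sum_mul]
      _ = ∑ i, ∑ g : C →ₗ[F] F,
            ((univ.filter fun c : F => c • ν i = g).card : ℂ) * ψ (g α) := Finset.sum_comm
      _ = ∑ i, if ν i α = 0 then (Fintype.card F : ℂ) else 0 :=
          Finset.sum_congr rfl fun i _ => h1 i
      _ = _ := by
          rw [← Finset.sum_filter, Finset.sum_const, nsmul_eq_mul]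
  -- weight hypothesis, rephrased for zero-sets
  have hzero : ∀ α : C, (univ.filter fun i => lam i α = 0).card
      = (univ.filter fun i => mu i α = 0).card := by
    intro α
    have e1 : (univ.filter fun i => lam i α = 0).card
        + (univ.filter fun i => ¬ lam i α = 0).card = Fintype.card Ω :=
      Finset.card_filter_add_card_filter_not _
    have e2 : (univ.filter fun i => mu i α = 0).card
        + (univ.filter fun i => ¬ mu i α = 0).card = Fintype.card Ω :=
      Finset.card_filter_add_card_filter_not _
    have e3 : (univ.filter fun i => ¬ mu i α = 0).card
        = (univ.filter fun i => ¬ lam i α = 0).card := hwt α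
    omega
  -- linear independence of the characters ψ ∘ g
  have hchar_inj : Function.Injective
      (fun g : C →ₗ[F] F => ψ.compAddMonoidHom g.toAddMonoidHom) := by
    intro g g' hgg'
    by_contra hne
    obtain ⟨α₀, hα₀⟩ : ∃ α₀ : C, g α₀ - g' α₀ ≠ 0 := by
      by_contra hforall
      push_neg at hforall
      exact hne (LinearMap.ext fun α => sub_eq_zero.1 (hforall α))
    obtain ⟨x, hx⟩ := AddChar.ne_one_iff.1 hψne
    set α : C := (x * (g α₀ - g' α₀)⁻¹) • α₀ with hα
    have hgα : g α - g' α = x := by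
      rw [hα, map_smul, map_smul, smul_eq_mul, smul_eq_mul, ← mul_sub,
        mul_assoc, inv_mul_cancel₀ hα₀, mul_one]
    have h1 : ψ (g α) = ψ (g' α) := by
      have := DFunLike.congr_fun hgg' α
      simpa using this
    have h2 : ψ (g α) = ψ (g α - g' α) * ψ (g' α) := by
      rw [← AddChar.map_add_eq_mul, sub_add_cancel]
    rw [h1, hgα] at h2
    have h3 : ψ (g' α) ≠ 0 := (ψ.val_isUnit _).ne_zero
    have h4 : ψ x * ψ (g' α) = 1 * ψ (g' α) := by rw [one_mul, ← h2]
    exact hx (mul_right_cancel₀ h3 h4)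
  have hli : LinearIndependent ℂ
      (fun g : C →ₗ[F] F => fun α : C => ψ (g α)) :=
    (AddChar.linearIndependent C ℂ).comp _ hchar_inj
  -- equal multiplicities
  have hcnt : ∀ g : C →ₗ[F] F, cnt lam g = cnt mu g := by
    have h0 : ∑ g : C →ₗ[F] F, ((cnt lam g : ℂ) - (cnt mu g : ℂ)) •
        (fun α : C => ψ (g α)) = 0 := by
      funext α
      rw [Finset.sum_apply]
      simp only [Pi.smul_apply, smul_eq_mul, Pi.zero_apply]
      have : ∑ g : C →ₗ[F] F, ((cnt lam g : ℂ) - (cnt mu g : ℂ)) * ψ (g α)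
          = (∑ g : C →ₗ[F] F, (cnt lam g : ℂ) * ψ (g α))
            - ∑ g : C →ₗ[F] F, (cnt mu g : ℂ) * ψ (g α) := by
        rw [← Finset.sum_sub_distrib]
        exact Finset.sum_congr rfl fun g _ => by ring
      rw [this, key lam α, key mu α, hzero α, sub_self]
    intro g
    have := Fintype.linearIndependent_iff.1 hli
      (fun g => (cnt lam g : ℂ) - (cnt mu g : ℂ)) h0 g
    exact_mod_cast sub_eq_zero.1 this
  -- cancellation helper
  have smul_cancel : ∀ (a : F) (g : C →ₗ[F] F), g ≠ 0 → a • g = 0 → a = 0 := by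
    intro a g hg ha
    by_contra h
    apply hg
    have := congrArg (fun y => a⁻¹ • y) ha
    simpa [smul_smul, inv_mul_cancel₀ h] using this
  -- per-index fiber counts at a nonzero functional
  have hfib : ∀ (ν : Ω → (C →ₗ[F] F)) (g : C →ₗ[F] F), g ≠ 0 → ∀ i : Ω,
      (univ.filter fun c : F => c • ν i = g).card
        = if ∃ u : Fˣ, ν i = u • g then 1 else 0 := by
    intro ν g hg i
    split_ifs with h
    · obtain ⟨u, hu⟩ := h
      rw [Finset.card_eq_one]
      refine ⟨((u⁻¹ : Fˣ) : F), ?_⟩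
      ext c
      simp only [Finset.mem_filter, Finset.mem_univ, true_and, Finset.mem_singleton, hu,
        Units.smul_def]
      constructor
      · intro hc
        rw [smul_smul] at hc
        have h2 : (c * (u:F) - 1) • g = 0 := by
          refine LinearMap.ext fun x => ?_
          have hx := DFunLike.congr_fun hc x
          simp only [LinearMap.smul_apply, smul_eq_mul, LinearMap.zero_apply] at hx ⊢
          rw [sub_mul, one_mul, hx, sub_self]
        have h3 : c * (u:F) = 1 := sub_eq_zero.1 (smul_cancel _ _ hg h2)
        have hcval : c = ((u:F))⁻¹ := by
          have h5 := congrArg (fun y => y * ((u:F))⁻¹) h3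
          simpa [mul_assoc, mul_inv_cancel₀ (Units.ne_zero u)] using h5
        rw [Units.val_inv_eq_inv_val]
        exact hcval
      · rintro rfl
        rw [smul_smul, Units.val_inv_eq_inv_val, inv_mul_cancel₀ (Units.ne_zero u), one_smul]
    · rw [Finset.card_eq_zero, Finset.filter_eq_empty_iff]
      intro c _
      intro hc
      apply h
      have hc0 : c ≠ 0 := by
        rintro rfl
        rw [zero_smul] at hc
        exact hg hc.symm
      refine ⟨(Units.mk0 c hc0)⁻¹, ?_⟩
      rw [← hc, Units.smul_def, Units.val_inv_eq_inv_val, Units.val_mk0, smul_smul,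
        inv_mul_cancel₀ hc0, one_smul]
  -- class counts at nonzero functionals agree
  have hclass : ∀ g : C →ₗ[F] F, g ≠ 0 →
      (univ.filter fun i => ∃ u : Fˣ, lam i = u • g).card
        = (univ.filter fun i => ∃ u : Fˣ, mu i = u • g).card := by
    intro g hg
    have h1 : ∀ ν : Ω → (C →ₗ[F] F),
        (univ.filter fun i => ∃ u : Fˣ, ν i = u • g).card = cnt ν g := by
      intro ν
      rw [Finset.card_filter, hcnt_def]
      exact Finset.sum_congr rfl fun i _ => by rw [hfib ν g hg i]
    rw [h1 lam, h1 mu, hcnt g]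
  -- zero-functional counts agree
  have hzc : (univ.filter fun i => lam i = 0).card = (univ.filter fun i => mu i = 0).card := by
    have h2 : ∀ ν : Ω → (C →ₗ[F] F), cnt ν 0
        = (univ.filter fun i => ν i = 0).card * (Fintype.card F - 1) + Fintype.card Ω := by
      intro ν
      have h3 : ∀ i : Ω, (univ.filter fun c : F => c • ν i = 0).card
          = (if ν i = 0 then Fintype.card F - 1 else 0) + 1 := by
        intro i
        by_cases h : ν i = 0
        · rw [if_pos h]
          have : (univ.filter fun c : F => c • ν i = 0) = univ := by
            refine Finset.filter_true_of_mem fun c _ => ?_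
            rw [h, smul_zero]
          rw [this, Finset.card_univ]
          have : 1 ≤ Fintype.card F := Fintype.card_pos
          omega
        · rw [if_neg h]
          have : (univ.filter fun c : F => c • ν i = 0) = {0} := by
            ext c
            simp only [Finset.mem_filter, Finset.mem_univ, true_and, Finset.mem_singleton]
            constructor
            · intro hc; exact smul_cancel _ _ h hc
            · rintro rfl; rw [zero_smul]
          rw [this, Finset.card_singleton]
      rw [hcnt_def]
      simp only []
      rw [Finset.sum_congr rfl fun i _ => h3 i, Finset.sum_add_distrib, Finset.sum_const,
        ← Finset.sum_filter, Finset.sum_const, smul_eq_mul, smul_eq_mul, mul_one,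
        Finset.card_univ]
    have h4 := hcnt 0
    rw [h2 lam, h2 mu] at h4
    have h5 : (univ.filter fun i => lam i = 0).card * (Fintype.card F - 1)
        = (univ.filter fun i => mu i = 0).card * (Fintype.card F - 1) := by omega
    have h6 : 0 < Fintype.card F - 1 := by
      have : 2 ≤ Fintype.card F := Fintype.one_lt_card
      omega
    exact Nat.eq_of_mul_eq_mul_right h6 h5
  -- quotient by proportionality and matching bijection
  letI s : Setoid (C →ₗ[F] F) :=
    ⟨fun a b => ∃ u : Fˣ, a = u • b,
     ⟨fun a => ⟨1, by simp⟩,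
      fun {a b} h => by
        obtain ⟨v, hv⟩ := h
        exact ⟨v⁻¹, by rw [hv, smul_smul, inv_mul_cancel, one_smul]⟩,
      fun {a b c} h h' => by
        obtain ⟨v, hv⟩ := h
        obtain ⟨w, hw⟩ := h'
        exact ⟨v * w, by rw [hv, hw, smul_smul]⟩⟩⟩
  have hfibq : ∀ t : Quotient s,
      (univ.filter fun i => (Quotient.mk s (lam i)) = t).card
        = (univ.filter fun i => (Quotient.mk s (mu i)) = t).card := by
    intro t
    induction t using Quotient.ind with
    | _ g =>
    have hEq : ∀ ν : Ω → (C →ₗ[F] F),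
        (univ.filter fun i => Quotient.mk s (ν i) = Quotient.mk s g)
        = univ.filter fun i => ∃ u : Fˣ, ν i = u • g := by
      intro ν
      refine Finset.filter_congr fun i _ => ?_
      exact ⟨fun h => Quotient.exact h, fun h => Quotient.sound h⟩
    rw [hEq lam, hEq mu]
    by_cases hg : g = 0
    · subst hg
      have hz : ∀ h : C →ₗ[F] F, ((∃ u : Fˣ, h = u • (0 : C →ₗ[F] F)) ↔ h = 0) := by
        intro h
        constructor
        · rintro ⟨v, hv⟩; rw [hv, smul_zero]
        · rintro rfl; exact ⟨1, by rw [smul_zero]⟩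
      rw [Finset.filter_congr fun i _ => hz (lam i), Finset.filter_congr fun i _ => hz (mu i)]
      exact hzc
    · exact hclass g hg
  obtain ⟨e, he⟩ := exists_equiv_of_fiber_card_eq
    (fun i => Quotient.mk s (lam i)) (fun i => Quotient.mk s (mu i)) hfibq
  have hrel : ∀ i, ∃ u : Fˣ, mu i = u • lam (e i) := by
    intro i
    obtain ⟨v, hv⟩ := Quotient.exact (he i)
    exact ⟨v⁻¹, by rw [hv, smul_smul, inv_mul_cancel, one_smul]⟩
  choose u hu using hrel
  have hc0 : ∀ i, ((u i : F)) ≠ 0 := fun i => Units.ne_zero (u i)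
  -- the monomial transformation
  let T : (Ω → F) →ₗ[F] (Ω → F) :=
    { toFun := fun β i => (u i : F) * β (e i)
      map_add' := fun β γ => by funext i; simp [mul_add]
      map_smul' := fun r β => by
        funext i
        simp only [Pi.smul_apply, smul_eq_mul, RingHom.id_apply]
        ring }
  let Tinv : (Ω → F) →ₗ[F] (Ω → F) :=
    { toFun := fun γ j => ((u (e.symm j) : F))⁻¹ * γ (e.symm j)
      map_add' := fun β γ => by funext j; simp [mul_add]
      map_smul' := fun r β => by
        funext j
        simp only [Pi.smul_apply, smul_eq_mul, RingHom.id_apply]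
        ring }
  have hTTinv : T.comp Tinv = LinearMap.id := by
    refine LinearMap.ext fun γ => funext fun i => ?_
    show (u i : F) * (((u (e.symm (e i)) : F))⁻¹ * γ (e.symm (e i))) = γ i
    rw [e.symm_apply_apply, mul_inv_cancel_left₀ (hc0 i)]
  have hTinvT : Tinv.comp T = LinearMap.id := by
    refine LinearMap.ext fun β => funext fun j => ?_
    show ((u (e.symm j) : F))⁻¹ * ((u (e.symm j) : F) * β (e (e.symm j))) = β j
    rw [e.apply_symm_apply, inv_mul_cancel_left₀ (hc0 _)]
  refine ⟨LinearEquiv.ofLinear T Tinv hTTinv hTinvT, ?_, ?_⟩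
  · intro β
    have step1 : (univ.filter fun i => (u i : F) * β (e i) ≠ 0)
        = univ.filter fun i => β (e i) ≠ 0 := by
      refine Finset.filter_congr fun i _ => ?_
      constructor
      · intro h hb; exact h (by rw [hb, mul_zero])
      · intro h hb
        rcases mul_eq_zero.1 hb with h' | h'
        · exact hc0 i h'
        · exact h h'
    have step2 : (univ.filter fun i => β (e i) ≠ 0).card
        = (univ.filter fun j => β j ≠ 0).card := by
      refine Finset.card_bij (fun i _ => e i) ?_ ?_ ?_
      · intro i hi
        simp only [Finset.mem_filter, Finset.mem_univ, true_and] at hi ⊢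
        exact hi
      · intro i _ i' _ hii'
        exact e.injective hii'
      · intro j hj
        refine ⟨e.symm j, ?_, ?_⟩
        · simp only [Finset.mem_filter, Finset.mem_univ, true_and,
            e.apply_symm_apply] at hj ⊢
          exact hj
        · exact e.apply_symm_apply j
    show (univ.filter fun i => (u i : F) * β (e i) ≠ 0).card
        = (univ.filter fun i => β i ≠ 0).card
    rw [step1, step2]
  · intro α
    funext i
    have h : f α i = (u i • lam (e i)) α := DFunLike.congr_fun (hu i) α
    show (u i : F) * (α : Ω → F) (e i) = f α i
    rw [h, LinearMap.smul_apply, Units.smul_def, smul_eq_mul]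
    rfl
end
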